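/- Let α > 2 and let E ⊂ ℝⁿ be measurable with 0 < |E| < ∞. Then for every ε > 0 there exists a countable collection of closed cubes {Q_i} with diam(Q_i) < ε covering E, such that Σ_i |Q_i| < 2|E|, and moreover, letting Γ = {i : |Q_i| ≤ α |Q_i ∩ E|}, we have (1 - 2/α)|E| ≤ Σ_{i∈Γ} |Q_i|. -/

import Mathlib

open MeasureTheory Set

/-- Covering lemma: a set of finite positive measure can be covered by small closed
cubes with total volume less than twice the measure, and the cubes that meet `E`
substantially carry at least a `(1 - 2/α)` fraction of the measure of `E`. -/
theorem stmt_0 {n : ℕ} (hn : 0 < n) (α : ℝ) (hα : 2 < α) (E : Set (Fin n → ℝ))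
    (hE : MeasurableSet E) (h0 : 0 < volume E) (hfin : volume E < ⊤) :
    ∀ ε : ℝ, 0 < ε → ∃ (c : ℕ → (Fin n → ℝ)) (r : ℕ → ℝ),
      (∀ i, 0 < r i) ∧
      (∀ i, Metric.diam (Metric.closedBall (c i) (r i)) < ε) ∧
      E ⊆ ⋃ i, Metric.closedBall (c i) (r i) ∧
      (∑' i, volume (Metric.closedBall (c i) (r i))) < 2 * volume E ∧
      ENNReal.ofReal (1 - 2 / α) * volume E ≤
        ∑' i : {i : ℕ | volume (Metric.closedBall (c i) (r i)) ≤
            ENNReal.ofReal α * volume (Metric.closedBall (c i) (r i) ∩ E)},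
          volume (Metric.closedBall (c (i : ℕ)) (r (i : ℕ))) := by
  classical
  intro ε hε
  have hα0 : (0:ℝ) < α := lt_trans two_pos hα
  set m : ENNReal := volume E with hm
  have hm0 : m ≠ 0 := h0.ne'
  have hmtop : m ≠ ⊤ := hfin.ne
  have hmRpos : 0 < m.toReal := ENNReal.toReal_pos hm0 hmtop
  set η : ℝ := m.toReal / 4 with hηdef
  have hη0 : 0 < η := by positivity
  have hηE : ENNReal.ofReal (2 * η) < m := by
    rw [ENNReal.ofReal_lt_iff_lt_toReal (by positivity) hmtop]
    rw [hηdef]; linarith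
  -- Besicovitch covering
  obtain ⟨t, r, tcount, tE, hrt, hcover, hsum⟩ :=
    Besicovitch.exists_closedBall_covering_tsum_measure_le (volume)
      (ε := ENNReal.ofReal η) (ENNReal.ofReal_pos.2 hη0).ne'
      (fun _ => Ioo 0 (ε/4)) E
      (by
        intro x _ δ hδ
        refine ⟨min (ε/8) (δ/2), ⟨⟨by positivity, ?_⟩, ⟨by positivity, ?_⟩⟩⟩
        · exact lt_of_le_of_lt (min_le_left _ _) (by linarith)
        · exact lt_of_le_of_lt (min_le_right _ _) (by linarith))
  haveI : Encodable t := tcount.toEncodable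
  -- padding radii
  set pad : ℕ → ℝ := fun i => min (ε/8) ((η / 2 / 2 ^ i) ^ ((n:ℝ)⁻¹) / 2) with hpaddef
  have hgeo : ∀ i : ℕ, (0:ℝ) < η / 2 / 2 ^ i := fun i => by positivity
  have hpadpos : ∀ i, 0 < pad i := by
    intro i
    refine lt_min (by positivity) ?_
    have := Real.rpow_pos_of_pos (hgeo i) ((n:ℝ)⁻¹)
    positivity
  have hpadlt : ∀ i, pad i < ε/4 :=
    fun i => lt_of_le_of_lt (min_le_left _ _) (by linarith)
  have hpadvol : ∀ i, volume (Metric.closedBall (0 : Fin n → ℝ) (pad i))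
      ≤ ENNReal.ofReal (η / 2 / 2 ^ i) := by
    intro i
    rw [Real.volume_pi_closedBall _ (hpadpos i).le, Fintype.card_fin]
    refine ENNReal.ofReal_le_ofReal ?_
    have h1 : 2 * pad i ≤ (η / 2 / 2 ^ i) ^ ((n:ℝ)⁻¹) := by
      have := min_le_right (ε/8) ((η / 2 / 2 ^ i) ^ ((n:ℝ)⁻¹) / 2)
      rw [hpaddef]; dsimp only; linarith [this]
    calc (2 * pad i) ^ n ≤ ((η / 2 / 2 ^ i) ^ ((n:ℝ)⁻¹)) ^ n :=
          pow_le_pow_left₀ (by linarith [hpadpos i]) h1 n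
      _ = η / 2 / 2 ^ i := Real.rpow_inv_natCast_pow (hgeo i).le hn.ne'
  -- the sequence of centers and radii
  set c : ℕ → (Fin n → ℝ) :=
    fun i => (Encodable.decode₂ t i).elim (0 : Fin n → ℝ) (fun x => (x : Fin n → ℝ)) with hcdef
  set r' : ℕ → ℝ :=
    fun i => (Encodable.decode₂ t i).elim (pad i) (fun x => r (x : Fin n → ℝ)) with hr'def
  have hce : ∀ x : t, c (Encodable.encode x) = (x : Fin n → ℝ) := by
    intro x; simp [hcdef, Encodable.decode₂_encode]
  have hre : ∀ x : t, r' (Encodable.encode x) = r (x : Fin n → ℝ) := by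
    intro x; simp [hr'def, Encodable.decode₂_encode]
  have hr'pos : ∀ i, 0 < r' i := by
    intro i
    rcases h : Encodable.decode₂ t i with - | x
    · simp only [hr'def, h, Option.elim]; exact hpadpos i
    · simp only [hr'def, h, Option.elim]; exact (hrt x x.2).1
  have hr'lt : ∀ i, r' i < ε/4 := by
    intro i
    rcases h : Encodable.decode₂ t i with - | x
    · simp only [hr'def, h, Option.elim]; exact hpadlt i
    · simp only [hr'def, h, Option.elim]; exact (hrt x x.2).2
  refine ⟨c, r', hr'pos, ?_, ?_, ?_, ?_⟩
  · -- diameters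
    intro i
    calc Metric.diam (Metric.closedBall (c i) (r' i)) ≤ 2 * r' i :=
          Metric.diam_closedBall (hr'pos i).le
      _ < ε := by linarith [hr'lt i]
  · -- covering
    intro x hx
    obtain ⟨y, hyt, hxy⟩ : ∃ y ∈ t, x ∈ Metric.closedBall y (r y) := by
      simpa using hcover hx
    refine mem_iUnion.2 ⟨Encodable.encode (⟨y, hyt⟩ : t), ?_⟩
    rw [hce ⟨y, hyt⟩, hre ⟨y, hyt⟩]
    exact hxy
  all_goals {
    have hvle : ∀ i, volume (Metric.closedBall (c i) (r' i)) ≤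
        ((Encodable.decode₂ t i).elim 0
          (fun x => volume (Metric.closedBall (x : Fin n → ℝ) (r x))))
        + ENNReal.ofReal (η / 2 / 2 ^ i) := by
      intro i
      rcases h : Encodable.decode₂ t i with - | x
      · simp only [hcdef, hr'def, h, Option.elim]
        exact le_add_of_nonneg_of_le zero_le (hpadvol i)
      · simp only [hcdef, hr'def, h, Option.elim]
        exact le_add_of_le_of_nonneg le_rfl zero_le
    have hg : (∑' i : ℕ, (Encodable.decode₂ t i).elim 0
          (fun x => volume (Metric.closedBall (x : Fin n → ℝ) (r x))))
        = ∑' x : t, volume (Metric.closedBall (x : Fin n → ℝ) (r x)) := by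
      rw [← Function.Injective.tsum_eq (Encodable.encode_injective (α := t))
        (f := fun i : ℕ => (Encodable.decode₂ t i).elim 0
          (fun x => volume (Metric.closedBall (x : Fin n → ℝ) (r x))))]
      · congr 1
        funext x
        simp [Encodable.decode₂_encode]
      · intro i hi
        rcases h : Encodable.decode₂ t i with - | x
        · exfalso; apply hi; simp [Function.mem_support, h]
        · exact ⟨x, (Encodable.decode₂_eq_some.1 h)⟩
    have hp : (∑' i : ℕ, ENNReal.ofReal (η / 2 / 2 ^ i)) = ENNReal.ofReal η := by
      rw [← ENNReal.ofReal_tsum_of_nonneg (fun i => (hgeo i).le)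
        (hasSum_geometric_two' η).summable, (hasSum_geometric_two' η).tsum_eq]
    have htot : (∑' i, volume (Metric.closedBall (c i) (r' i))) < 2 * m := by
      calc (∑' i, volume (Metric.closedBall (c i) (r' i)))
          ≤ ∑' i : ℕ, (((Encodable.decode₂ t i).elim 0
              (fun x => volume (Metric.closedBall (x : Fin n → ℝ) (r x))))
            + ENNReal.ofReal (η / 2 / 2 ^ i)) := ENNReal.tsum_le_tsum hvle
        _ = (∑' i : ℕ, (Encodable.decode₂ t i).elim 0
              (fun x => volume (Metric.closedBall (x : Fin n → ℝ) (r x))))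
            + ∑' i : ℕ, ENNReal.ofReal (η / 2 / 2 ^ i) := ENNReal.tsum_add
        _ ≤ (m + ENNReal.ofReal η) + ENNReal.ofReal η := by
            rw [hg, hp]; exact add_le_add_left hsum _
        _ = m + ENNReal.ofReal (2 * η) := by
            rw [add_assoc, ← ENNReal.ofReal_add hη0.le hη0.le]; ring_nf
        _ < m + m := ENNReal.add_lt_add_left hmtop hηE
        _ = 2 * m := (two_mul m).symm
    first
    | exact htot
    | · -- the substantial cubes
        set w : ℕ → ENNReal := fun i => volume (Metric.closedBall (c i) (r' i) ∩ E) with hwdef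
        set v : ℕ → ENNReal := fun i => volume (Metric.closedBall (c i) (r' i)) with hvdef
        set Γ : Set ℕ := {i : ℕ | v i ≤ ENNReal.ofReal α * w i} with hΓdef
        have hcov' : E ⊆ ⋃ i, Metric.closedBall (c i) (r' i) := by
          intro x hx
          obtain ⟨y, hyt, hxy⟩ : ∃ y ∈ t, x ∈ Metric.closedBall y (r y) := by
            simpa using hcover hx
          refine mem_iUnion.2 ⟨Encodable.encode (⟨y, hyt⟩ : t), ?_⟩
          rw [hce ⟨y, hyt⟩, hre ⟨y, hyt⟩]
          exact hxy
        have hEsub : m ≤ ∑' i, w i := by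
          calc m = volume E := hm
            _ ≤ volume (⋃ i, Metric.closedBall (c i) (r' i) ∩ E) := by
                refine measure_mono (fun x hx => ?_)
                obtain ⟨i, hi⟩ := mem_iUnion.1 (hcov' hx)
                exact mem_iUnion.2 ⟨i, hi, hx⟩
            _ ≤ ∑' i, w i := measure_iUnion_le _
        have hbad : ∀ i : ℕ, i ∉ Γ → w i ≤ ENNReal.ofReal α⁻¹ * v i := by
          intro i hi
          have h1 : ENNReal.ofReal α * w i ≤ v i := (not_le.1 hi).le
          calc w i = (ENNReal.ofReal α⁻¹ * ENNReal.ofReal α) * w i := by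
                rw [← ENNReal.ofReal_mul (inv_nonneg.2 hα0.le),
                  inv_mul_cancel₀ hα0.ne', ENNReal.ofReal_one, one_mul]
            _ = ENNReal.ofReal α⁻¹ * (ENNReal.ofReal α * w i) := mul_assoc _ _ _
            _ ≤ ENNReal.ofReal α⁻¹ * v i := mul_le_mul_right h1 _
        have hbadsum : (∑' i : ↑Γᶜ, w i) ≤ ENNReal.ofReal (2/α) * m := by
          calc (∑' i : ↑Γᶜ, w i) ≤ ∑' i : ↑Γᶜ, ENNReal.ofReal α⁻¹ * v (i : ℕ) :=
                ENNReal.tsum_le_tsum (fun i => hbad i i.2)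
            _ = ENNReal.ofReal α⁻¹ * ∑' i : ↑Γᶜ, v (i : ℕ) := ENNReal.tsum_mul_left
            _ ≤ ENNReal.ofReal α⁻¹ * ∑' i : ℕ, v i := by
                exact mul_le_mul_right
                  (ENNReal.tsum_comp_le_tsum_of_injective Subtype.val_injective v) _
            _ ≤ ENNReal.ofReal α⁻¹ * (2 * m) := mul_le_mul_right htot.le _
            _ = ENNReal.ofReal (2/α) * m := by
                rw [← mul_assoc]
                congr 1
                rw [div_eq_mul_inv, ENNReal.ofReal_mul (by norm_num),
                  ENNReal.ofReal_ofNat, mul_comm]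
        have key : m ≤ (∑' i : ↑Γ, v (i : ℕ)) + ENNReal.ofReal (2/α) * m := by
          calc m ≤ ∑' i, w i := hEsub
            _ = (∑' i : ↑Γ, w (i : ℕ)) + ∑' i : ↑Γᶜ, w (i : ℕ) :=
                (Summable.tsum_add_tsum_compl ENNReal.summable ENNReal.summable).symm
            _ ≤ (∑' i : ↑Γ, v (i : ℕ)) + ENNReal.ofReal (2/α) * m :=
                add_le_add (ENNReal.tsum_le_tsum
                  (fun i => measure_mono inter_subset_left)) hbadsum
        have h2α1 : 2/α < 1 := (div_lt_one hα0).2 hα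
        have hsplit : ENNReal.ofReal (1 - 2/α) * m + ENNReal.ofReal (2/α) * m = m := by
          rw [← add_mul, ← ENNReal.ofReal_add (by linarith) (by positivity)]
          norm_num
        have final : ENNReal.ofReal (1 - 2/α) * m ≤ ∑' i : ↑Γ, v (i : ℕ) := by
          have hfinmul : ENNReal.ofReal (2/α) * m ≠ ⊤ :=
            ENNReal.mul_ne_top ENNReal.ofReal_ne_top hmtop
          refine (ENNReal.add_le_add_iff_right hfinmul).1 ?_
          rw [hsplit]
          exact key
        exact final }
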